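/- Fix a partition n = n_1 + ... + n_k of a positive integer n and let δ_1 ≥ δ_2 ≥ ... ≥ δ_m be the conjugate partition. Define the nondecreasing sequence m_0 ≤ m_1 ≤ ... ≤ m_{n-1} obtained by listing value i with multiplicity δ_i for i = 1,...,m (i.e., δ_1 ones, then δ_2 twos, etc.). Then for every r with 1 ≤ r ≤ n, m_{r-1} = min { max(j_1,...,j_k) : j_a ∈ ℤ, 0 ≤ j_a ≤ n_a, j_1 + ... + j_k = r }. -/
import Mathlib

lemma aux_fill {k : ℕ} (r : ℕ) (b : Fin k → ℕ) (h : r ≤ ∑ a, b a) :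
    ∃ j : Fin k → ℕ, (∀ a, j a ≤ b a) ∧ ∑ a, j a = r := by
  induction r with
  | zero => exact ⟨fun _ => 0, fun a => Nat.zero_le _, by simp⟩
  | succ r ih =>
    obtain ⟨j, hj, hjs⟩ := ih (by omega)
    have hlt : ∑ a, j a < ∑ a, b a := by omega
    have : ∃ a : Fin k, j a < b a := by
      by_contra hc
      push_neg at hc
      exact absurd (Finset.sum_le_sum fun a _ => hc a) (not_le.mpr hlt)
    obtain ⟨a, ha⟩ := this
    classical
    refine ⟨Function.update j a (j a + 1), ?_, ?_⟩
    · intro a'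
      rcases eq_or_ne a' a with rfl | hne
      · simp [Function.update_self]; omega
      · simp [Function.update_of_ne hne]; exact hj a'
    · rw [Finset.sum_update_of_mem (Finset.mem_univ a), Finset.sdiff_singleton_eq_erase]
      rw [← Finset.sum_erase_add _ _ (Finset.mem_univ a)] at hjs
      omega

/-- For every `r` with `1 ≤ r ≤ n`, the `r`-th term `m_{r-1}` of the nondecreasing
sequence consisting of `δ_1` ones, `δ_2` twos, ..., `δ_m` copies of `m` (where
`δ_i = #{a : n_a ≥ i}` is the conjugate partition of `(n_1,...,n_k)`) equals
`min { max(j_1,...,j_k) : 0 ≤ j_a ≤ n_a, j_1 + ... + j_k = r }`. -/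
theorem mseq_eq_min_max (k n : ℕ) (nn : Fin k → ℕ) (hn : ∀ a, 0 < nn a)
    (hsum : ∑ a, nn a = n)
    (δ : ℕ → ℕ) (hδ : ∀ i, δ i = (Finset.univ.filter (fun a : Fin k => i ≤ nn a)).card)
    (M : ℕ) (hM : M = Finset.univ.sup nn)
    (mseq : List ℕ)
    (hm : mseq = (List.range M).flatMap fun i => List.replicate (δ (i + 1)) (i + 1))
    (r : ℕ) (hr1 : 1 ≤ r) (hrn : r ≤ n) :
    mseq.getD (r - 1) 0 =
      sInf { v : ℕ | ∃ j : Fin k → ℕ,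
        (∀ a, j a ≤ nn a) ∧ (∑ a, j a = r) ∧ v = Finset.univ.sup j } := by
  classical
  set P : ℕ → ℕ := fun t => ∑ i ∈ Finset.range t, δ (i + 1) with hPdef
  have hPmin : ∀ t, P t = ∑ a, min (nn a) t := by
    intro t
    induction t with
    | zero => simp [P]
    | succ t ih =>
      have h1 : P (t + 1) = P t + δ (t + 1) := by
        simp [P, Finset.sum_range_succ]
      rw [h1, ih, hδ, Finset.card_filter, ← Finset.sum_add_distrib]
      refine Finset.sum_congr rfl fun a _ => ?_
      split_ifs with h <;> omega
  have hPM : P M = n := by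
    rw [hPmin, ← hsum]
    refine Finset.sum_congr rfl fun a _ => ?_
    have : nn a ≤ M := hM ▸ Finset.le_sup (Finset.mem_univ a)
    omega
  have hex : ∃ t, r ≤ P t := ⟨M, hPM ▸ hrn⟩
  set t := Nat.find hex with htdef
  have ht : r ≤ P t := Nat.find_spec hex
  have htM : t ≤ M := Nat.find_min' hex (hPM ▸ hrn)
  have htpos : 1 ≤ t := by
    by_contra hc
    have h0 : t = 0 := by omega
    have : P 0 = 0 := by simp [P]
    rw [h0, this] at ht; omega
  have hlt : P (t - 1) < r := by
    have := Nat.find_min hex (show t - 1 < t by omega)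
    omega
  -- Step A : mseq.getD (r-1) 0 = t
  have hA : mseq.getD (r - 1) 0 = t := by
    set s := t - 1 with hsdef
    have hst : t = s + 1 := by omega
    set f : ℕ → List ℕ := fun i => List.replicate (δ (i + 1)) (i + 1) with hfdef
    have lenlem : ∀ m, ((List.range m).flatMap f).length = P m := by
      intro m
      induction m with
      | zero => simp [P]
      | succ m ih =>
        rw [List.range_succ, List.flatMap_append]
        simp [ih, P, Finset.sum_range_succ, f]
    have hMs : M = s + (M - s) := by omega
    have hMs1 : M - s = (M - s - 1) + 1 := by omega
    have hsplit : mseq = ((List.range s).flatMap f) ++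
        (List.replicate (δ (s + 1)) (s + 1) ++
          (((List.range (M - s - 1)).map (fun i => s + Nat.succ i)).flatMap f)) := by
      rw [hm, hMs, List.range_add, List.flatMap_append]
      congr 1
      rw [hMs1, List.range_succ_eq_map, List.map_cons, List.flatMap_cons, List.map_map]
      simp [f, Function.comp_def, Nat.succ_eq_add_one]
    rw [hsplit, List.getD_append_right _ _ _ _ (by rw [lenlem]; omega)]
    rw [lenlem]
    have hq : r - 1 - P s < δ (s + 1) := by
      have h2 : P t = P s + δ (s + 1) := by
        rw [hst]; simp [P, Finset.sum_range_succ]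
      omega
    rw [List.getD_append _ _ _ _ (by simpa using hq)]
    rw [hst]
    simp [List.getD, List.getElem?_replicate, hq]
  rw [hA]
  -- Step B : sInf = t
  have hb : r ≤ ∑ a, min (nn a) t := by rw [← hPmin]; exact ht
  obtain ⟨j, hj, hjs⟩ := aux_fill r (fun a => min (nn a) t) hb
  have hsuple : Finset.univ.sup j ≤ t :=
    Finset.sup_le fun a _ => le_trans (hj a) (min_le_right _ _)
  have hsupge : ¬ Finset.univ.sup j ≤ t - 1 := by
    intro hc
    have : r ≤ P (t - 1) := by
      rw [hPmin, ← hjs]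
      refine Finset.sum_le_sum fun a _ => ?_
      have h1 : j a ≤ nn a := le_trans (hj a) (min_le_left _ _)
      have h2 : j a ≤ t - 1 := le_trans (Finset.le_sup (Finset.mem_univ a)) hc
      omega
    omega
  have hsup : Finset.univ.sup j = t := by omega
  have hmem : t ∈ { v : ℕ | ∃ j : Fin k → ℕ,
      (∀ a, j a ≤ nn a) ∧ (∑ a, j a = r) ∧ v = Finset.univ.sup j } :=
    ⟨j, fun a => le_trans (hj a) (min_le_left _ _), hjs, hsup.symm⟩
  refine le_antisymm ?_ (Nat.sInf_le hmem)
  refine le_csInf ⟨t, hmem⟩ ?_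
  rintro v ⟨j', hj', hjs', rfl⟩
  have : r ≤ P (Finset.univ.sup j') := by
    rw [hPmin, ← hjs']
    refine Finset.sum_le_sum fun a _ => ?_
    exact le_min (hj' a) (Finset.le_sup (Finset.mem_univ a))
  exact Nat.find_min' hex this
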